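/- Let F(a, z) be the generalized polynomial of class P(N, α) as above and a, a′ two admissible coefficient vectors, s = α_N + 2. Then for all x, y ∈ ℝ^d: |F(a,|x|)x − F(a′,|y|)y| ≤ C₁(1 + |x| + |y|)^{s−2+α} |x − y|^{1−α} + C₂(1 + |x| + |y|)^{s−1} |a − a′|, with C₁ = 2(s−1)/(1−α) (up to a factor depending on N and a^*) and C₂ = 3N. -/

import Mathlib

open Real Finset

lemma coord_le_norm {n : ℕ} (v : EuclideanSpace ℝ (Fin n)) (i : Fin n) : |v i| ≤ ‖v‖ := by
  rw [EuclideanSpace.norm_eq]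
  have h1 : |v i| = Real.sqrt (v i ^ 2) := by
    rw [Real.sqrt_sq_eq_abs]
  rw [h1]
  apply Real.sqrt_le_sqrt
  simpa using Finset.single_le_sum (f := fun j => v j ^ 2) (fun j _ => sq_nonneg _)
    (Finset.mem_univ i)

lemma mvt_rpow (p u t : ℝ) (hu : 0 < u) (hut : u ≤ t) :
    |t ^ p - u ^ p| ≤ |p| * (u ^ (p - 1) + t ^ (p - 1)) * (t - u) := by
  have ht : 0 < t := hu.trans_le hut
  have key := Convex.norm_image_sub_le_of_norm_hasDerivWithin_le
    (f := fun r : ℝ => r ^ p) (f' := fun r : ℝ => p * r ^ (p - 1))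
    (s := Set.Icc u t) (C := |p| * (u ^ (p - 1) + t ^ (p - 1)))
    (fun r hr => (Real.hasDerivAt_rpow_const
      (Or.inl (ne_of_gt (hu.trans_le hr.1)))).hasDerivWithinAt)
    (fun r hr => by
      have hr0 : 0 < r := hu.trans_le hr.1
      rw [norm_mul, Real.norm_eq_abs, Real.norm_eq_abs,
        abs_of_nonneg (Real.rpow_nonneg hr0.le _)]
      rcases le_or_gt 0 (p - 1) with h | h
      · have : r ^ (p-1) ≤ t ^ (p-1) := Real.rpow_le_rpow hr0.le hr.2 h
        nlinarith [Real.rpow_nonneg hu.le (p-1), abs_nonneg p]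
      · have : r ^ (p-1) ≤ u ^ (p-1) := Real.rpow_le_rpow_of_nonpos hu hr.1 h.le
        nlinarith [Real.rpow_nonneg ht.le (p-1), abs_nonneg p])
    (convex_Icc u t) (Set.left_mem_Icc.2 hut) (Set.right_mem_Icc.2 hut)
  simpa [Real.norm_eq_abs, abs_of_nonneg (sub_nonneg.2 hut)] using key

section
variable {E : Type*} [NormedAddCommGroup E] [NormedSpace ℝ E]

lemma pos_term_aux {β : ℝ} (hβ : 0 < β) (x y : E) (h : ‖y‖ ≤ ‖x‖) :
    ‖(‖x‖ ^ β) • x - (‖y‖ ^ β) • y‖ ≤ (1 + 2 * β) * ‖x‖ ^ β * ‖x - y‖ := by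
  set t := ‖x‖ with htdef
  set u := ‖y‖ with hudef
  have ht0 : 0 ≤ t := norm_nonneg x
  have hu0 : 0 ≤ u := norm_nonneg y
  have hd : t - u ≤ ‖x - y‖ := by
    simpa [htdef, hudef] using norm_sub_norm_le x y
  have hd0 : 0 ≤ ‖x - y‖ := norm_nonneg _
  have hkey : (t ^ β) • x - (u ^ β) • y = (t ^ β) • (x - y) + (t ^ β - u ^ β) • y := by
    simp only [smul_sub, sub_smul]; abel
  rw [hkey]
  have htu : 0 ≤ t ^ β - u ^ β := sub_nonneg.2 (Real.rpow_le_rpow hu0 h hβ.le)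
  have hstep : (t ^ β - u ^ β) * u ≤ 2 * β * t ^ β * ‖x - y‖ := by
    rcases eq_or_lt_of_le hu0 with h0 | hu
    · rw [← h0, mul_zero]
      positivity
    · have ht : 0 < t := hu.trans_le h
      have hmvt := mvt_rpow β u t hu h
      rw [abs_of_nonneg htu, abs_of_pos hβ] at hmvt
      have h1 : u ^ (β - 1) * u ≤ t ^ β := by
        calc u ^ (β - 1) * u = u ^ β := by
              rw [← Real.rpow_add_one hu.ne' (β - 1)]; ring_nf
          _ ≤ t ^ β := Real.rpow_le_rpow hu0 h hβ.le
      have h2 : t ^ (β - 1) * u ≤ t ^ β := by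
        calc t ^ (β - 1) * u ≤ t ^ (β - 1) * t := by
              exact mul_le_mul_of_nonneg_left (h) (Real.rpow_nonneg ht0 _)
          _ = t ^ β := by rw [← Real.rpow_add_one ht.ne' (β - 1)]; ring_nf
      calc (t ^ β - u ^ β) * u ≤ (β * (u ^ (β - 1) + t ^ (β - 1)) * (t - u)) * u := by
            apply mul_le_mul_of_nonneg_right hmvt hu0
        _ = β * ((u ^ (β - 1) * u + t ^ (β - 1) * u)) * (t - u) := by ring
        _ ≤ β * (t ^ β + t ^ β) * ‖x - y‖ := by
            apply mul_le_mul (mul_le_mul_of_nonneg_left (by linarith) hβ.le) hd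
              (by linarith [hu.le.trans h]) (by positivity)
        _ = 2 * β * t ^ β * ‖x - y‖ := by ring
  calc ‖(t ^ β) • (x - y) + (t ^ β - u ^ β) • y‖
      ≤ ‖(t ^ β) • (x - y)‖ + ‖(t ^ β - u ^ β) • y‖ := norm_add_le _ _
    _ = t ^ β * ‖x - y‖ + (t ^ β - u ^ β) * u := by
        rw [norm_smul, norm_smul, Real.norm_eq_abs, Real.norm_eq_abs,
          abs_of_nonneg (Real.rpow_nonneg ht0 _), abs_of_nonneg htu]
    _ ≤ t ^ β * ‖x - y‖ + 2 * β * t ^ β * ‖x - y‖ := by linarith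
    _ = (1 + 2 * β) * t ^ β * ‖x - y‖ := by ring

lemma pos_term {β : ℝ} (hβ : 0 < β) (x y : E) :
    ‖(‖x‖ ^ β) • x - (‖y‖ ^ β) • y‖ ≤ (1 + 2 * β) * (1 + ‖x‖ + ‖y‖) ^ β * ‖x - y‖ := by
  have hR : ∀ z w : E, ‖z‖ ≤ 1 + ‖z‖ + ‖w‖ := fun z w => by
    have := norm_nonneg w; linarith [norm_nonneg z]
  rcases le_total ‖y‖ ‖x‖ with h | h
  · calc ‖(‖x‖ ^ β) • x - (‖y‖ ^ β) • y‖ ≤ (1 + 2 * β) * ‖x‖ ^ β * ‖x - y‖ :=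
        pos_term_aux hβ x y h
      _ ≤ (1 + 2 * β) * (1 + ‖x‖ + ‖y‖) ^ β * ‖x - y‖ := by
        apply mul_le_mul_of_nonneg_right _ (norm_nonneg _)
        exact mul_le_mul_of_nonneg_left
          (Real.rpow_le_rpow (norm_nonneg x) (hR x y) hβ.le) (by linarith)
  · rw [norm_sub_rev, norm_sub_rev x y]
    calc ‖(‖y‖ ^ β) • y - (‖x‖ ^ β) • x‖ ≤ (1 + 2 * β) * ‖y‖ ^ β * ‖y - x‖ :=
        pos_term_aux hβ y x h
      _ ≤ (1 + 2 * β) * (1 + ‖x‖ + ‖y‖) ^ β * ‖y - x‖ := by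
        apply mul_le_mul_of_nonneg_right _ (norm_nonneg _)
        apply mul_le_mul_of_nonneg_left _ (by linarith)
        apply Real.rpow_le_rpow (norm_nonneg y) _ hβ.le
        linarith [norm_nonneg x, norm_nonneg y]

lemma neg_term {α : ℝ} (hα0 : 0 < α) (hα1 : α < 1) (x y : E) (h : ‖y‖ ≤ ‖x‖) :
    ‖(‖x‖ ^ (-α)) • x - (‖y‖ ^ (-α)) • y‖ ≤ 4 * ‖x - y‖ ^ (1 - α) := by
  by_cases hxy : x = y
  · subst hxy
    simp only [sub_self, norm_zero]
    positivity
  have hdpos : 0 < ‖x - y‖ := by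
    rw [norm_pos_iff, sub_ne_zero]; exact hxy
  have ht : 0 < ‖x‖ := by
    rcases (norm_nonneg x).eq_or_lt with h0 | h0
    · exfalso
      have hx0 : x = 0 := norm_eq_zero.1 h0.symm
      have hy0 : y = 0 := norm_eq_zero.1 (le_antisymm (by rw [← h0] at h; exact h) (norm_nonneg y))
      exact hxy (by rw [hx0, hy0])
    · exact h0
  set t := ‖x‖ with htdef
  set u := ‖y‖ with hudef
  set D := ‖x - y‖ with hDdef
  have hu0 : 0 ≤ u := norm_nonneg y
  have hDsplit : D = D ^ α * D ^ (1 - α) := by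
    rw [← Real.rpow_add hdpos]; norm_num
  have hkey : (t ^ (-α)) • x - (u ^ (-α)) • y
      = (t ^ (-α)) • (x - y) + (t ^ (-α) - u ^ (-α)) • y := by
    simp only [smul_sub, sub_smul]; abel
  have term1 : t ^ (-α) * D ≤ 2 * D ^ (1 - α) := by
    have hD2t : D ≤ 2 * t := by
      calc D ≤ t + u := norm_sub_le x y
        _ ≤ 2 * t := by linarith
    have h1 : D ^ α ≤ (2 * t) ^ α := Real.rpow_le_rpow hdpos.le hD2t hα0.le
    have h2 : (2 * t) ^ α = 2 ^ α * t ^ α := Real.mul_rpow (by norm_num) ht.le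
    have h3 : t ^ (-α) * t ^ α = 1 := by
      rw [← Real.rpow_add ht]; norm_num
    have h4 : (2:ℝ) ^ α ≤ 2 := by
      calc (2:ℝ) ^ α ≤ (2:ℝ) ^ (1:ℝ) := Real.rpow_le_rpow_of_exponent_le one_le_two hα1.le
        _ = 2 := Real.rpow_one 2
    calc t ^ (-α) * D = (t ^ (-α) * D ^ α) * D ^ (1 - α) := by
          conv_lhs => rw [hDsplit]
          ring
      _ ≤ (t ^ (-α) * (2 ^ α * t ^ α)) * D ^ (1 - α) := by
          apply mul_le_mul_of_nonneg_right _ (Real.rpow_nonneg hdpos.le _)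
          rw [← h2]
          exact mul_le_mul_of_nonneg_left h1 (Real.rpow_nonneg ht.le _)
      _ = 2 ^ α * D ^ (1 - α) := by
          rw [show t ^ (-α) * (2 ^ α * t ^ α) = 2 ^ α * (t ^ (-α) * t ^ α) by ring, h3, mul_one]
      _ ≤ 2 * D ^ (1 - α) := mul_le_mul_of_nonneg_right h4 (Real.rpow_nonneg hdpos.le _)
  have term2 : |t ^ (-α) - u ^ (-α)| * u ≤ 2 * D ^ (1 - α) := by
    rcases eq_or_lt_of_le hu0 with h0 | hu
    · rw [← h0, mul_zero]
      positivity
    · have hmono : t ^ (-α) ≤ u ^ (-α) :=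
        Real.rpow_le_rpow_of_nonpos hu h (by linarith)
      rw [abs_of_nonpos (by linarith), neg_sub]
      rcases le_or_gt u D with hcase | hcase
      · have : (u ^ (-α) - t ^ (-α)) * u ≤ u ^ (-α) * u := by
          apply mul_le_mul_of_nonneg_right _ hu0
          have : 0 ≤ t ^ (-α) := Real.rpow_nonneg ht.le _
          linarith
        have hr : u ^ (-α) * u = u ^ (1 - α) := by
          rw [← Real.rpow_add_one hu.ne']; ring_nf
        have hle : u ^ (1 - α) ≤ D ^ (1 - α) :=
          Real.rpow_le_rpow hu0 hcase (by linarith)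
        calc (u ^ (-α) - t ^ (-α)) * u ≤ u ^ (1 - α) := by rw [← hr]; exact this
          _ ≤ D ^ (1 - α) := hle
          _ ≤ 2 * D ^ (1 - α) := by linarith [Real.rpow_nonneg hdpos.le (1 - α)]
      · have hmvt := mvt_rpow (-α) u t hu h
        rw [abs_of_neg (by linarith : -α < 0), neg_neg] at hmvt
        have habs : u ^ (-α) - t ^ (-α) ≤ |t ^ (-α) - u ^ (-α)| := by
          rw [abs_sub_comm]; exact le_abs_self _
        have h5 : t ^ (-α - 1) ≤ u ^ (-α - 1) :=
          Real.rpow_le_rpow_of_nonpos hu h (by linarith)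
        have h6 : u ^ (-α - 1) * u = u ^ (-α) := by
          rw [← Real.rpow_add_one hu.ne']; ring_nf
        have h7 : u ^ (-α) ≤ D ^ (-α) :=
          Real.rpow_le_rpow_of_nonpos hdpos hcase.le (by linarith)
        have h8 : D ^ (-α) * D = D ^ (1 - α) := by
          rw [← Real.rpow_add_one hdpos.ne']; ring_nf
        have htu : t - u ≤ D := by
          simpa [htdef, hudef, hDdef] using norm_sub_norm_le x y
        have htu0 : 0 ≤ t - u := sub_nonneg.2 h
        calc (u ^ (-α) - t ^ (-α)) * u
            ≤ (α * (u ^ (-α - 1) + t ^ (-α - 1)) * (t - u)) * u :=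
              mul_le_mul_of_nonneg_right (habs.trans hmvt) hu0
          _ ≤ (α * (u ^ (-α - 1) + u ^ (-α - 1)) * (t - u)) * u := by
              apply mul_le_mul_of_nonneg_right _ hu0
              apply mul_le_mul_of_nonneg_right _ htu0
              apply mul_le_mul_of_nonneg_left _ hα0.le
              linarith
          _ = 2 * α * (u ^ (-α - 1) * u) * (t - u) := by ring
          _ = 2 * α * u ^ (-α) * (t - u) := by rw [h6]
          _ ≤ 2 * α * D ^ (-α) * D := by
              apply mul_le_mul (mul_le_mul_of_nonneg_left h7 (by linarith)) htu htu0
              positivity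
          _ = 2 * α * D ^ (1 - α) := by rw [mul_assoc, h8]
          _ ≤ 2 * D ^ (1 - α) := by
              apply mul_le_mul_of_nonneg_right _ (Real.rpow_nonneg hdpos.le _)
              linarith
  calc ‖(t ^ (-α)) • x - (u ^ (-α)) • y‖
      = ‖(t ^ (-α)) • (x - y) + (t ^ (-α) - u ^ (-α)) • y‖ := by rw [hkey]
    _ ≤ ‖(t ^ (-α)) • (x - y)‖ + ‖(t ^ (-α) - u ^ (-α)) • y‖ := norm_add_le _ _
    _ = t ^ (-α) * D + |t ^ (-α) - u ^ (-α)| * u := by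
        rw [norm_smul, norm_smul, Real.norm_eq_abs, Real.norm_eq_abs,
          abs_of_nonneg (Real.rpow_nonneg ht.le _)]
    _ ≤ 2 * D ^ (1 - α) + 2 * D ^ (1 - α) := add_le_add term1 term2
    _ = 4 * D ^ (1 - α) := by ring

lemma neg_term' {α : ℝ} (hα0 : 0 < α) (hα1 : α < 1) (x y : E) :
    ‖(‖x‖ ^ (-α)) • x - (‖y‖ ^ (-α)) • y‖ ≤ 4 * ‖x - y‖ ^ (1 - α) := by
  rcases le_total ‖y‖ ‖x‖ with h | h
  · exact neg_term hα0 hα1 x y h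
  · rw [norm_sub_rev, norm_sub_rev x y]
    exact neg_term hα0 hα1 y x h

lemma partA {N : ℕ} {α : ℝ} (hα0 : 0 < α) (hα1 : α < 1)
    (e : Fin N → ℝ) (hepos : ∀ i, 0 < e i)
    (emax : ℝ) (hemax : ∀ i, e i ≤ emax) (hemax0 : 0 < emax)
    (asup : ℝ) (b0 b1 : ℝ) (b : Fin N → ℝ)
    (hb0 : 0 ≤ b0) (hb0' : b0 ≤ asup) (hb1 : 0 ≤ b1) (hb1' : b1 ≤ asup)
    (hb : ∀ i, 0 ≤ b i) (hb' : ∀ i, b i ≤ asup) (x y : E) :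
    ‖(b0 * ‖x‖ ^ (-α) + b1 + ∑ i, b i * ‖x‖ ^ (e i)) • x -
      (b0 * ‖y‖ ^ (-α) + b1 + ∑ i, b i * ‖y‖ ^ (e i)) • y‖ ≤
      asup * (5 + ∑ i, (1 + 2 * e i)) * (1 + ‖x‖ + ‖y‖) ^ (emax + α) *
        ‖x - y‖ ^ (1 - α) := by
  have hasup0 : 0 ≤ asup := hb0.trans hb0'
  set R := 1 + ‖x‖ + ‖y‖ with hRdef
  set D := ‖x - y‖ with hDdef
  have hR1 : 1 ≤ R := by
    rw [hRdef]; linarith [norm_nonneg x, norm_nonneg y]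
  have hR0 : 0 < R := by linarith
  have hD0 : 0 ≤ D := norm_nonneg _
  have hDR : D ≤ R := by
    calc D ≤ ‖x‖ + ‖y‖ := norm_sub_le x y
      _ ≤ R := by rw [hRdef]; linarith
  have hDsplit : D ≤ R ^ α * D ^ (1 - α) := by
    have h1 : D ^ (α + (1 - α)) = D ^ α * D ^ (1 - α) :=
      Real.rpow_add' hD0 (by norm_num)
    rw [show α + (1 - α) = 1 by ring, Real.rpow_one] at h1
    calc D = D ^ α * D ^ (1 - α) := h1
      _ ≤ R ^ α * D ^ (1 - α) :=
        mul_le_mul_of_nonneg_right (Real.rpow_le_rpow hD0 hDR hα0.le)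
          (Real.rpow_nonneg hD0 _)
  have hT : ∀ β : ℝ, 0 ≤ β → β ≤ emax →
      R ^ β * D ≤ R ^ (emax + α) * D ^ (1 - α) := by
    intro β hβ0 hβm
    calc R ^ β * D ≤ R ^ β * (R ^ α * D ^ (1 - α)) :=
        mul_le_mul_of_nonneg_left hDsplit (Real.rpow_nonneg hR0.le _)
      _ = R ^ (β + α) * D ^ (1 - α) := by
          rw [← mul_assoc, ← Real.rpow_add hR0]
      _ ≤ R ^ (emax + α) * D ^ (1 - α) :=
          mul_le_mul_of_nonneg_right
            (Real.rpow_le_rpow_of_exponent_le hR1 (by linarith))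
            (Real.rpow_nonneg hD0 _)
  have hone : 1 ≤ R ^ (emax + α) := by
    calc (1:ℝ) = R ^ (0:ℝ) := (Real.rpow_zero R).symm
      _ ≤ R ^ (emax + α) := Real.rpow_le_rpow_of_exponent_le hR1 (by linarith)
  set T := R ^ (emax + α) * D ^ (1 - α) with hTdef
  have hT0 : 0 ≤ T := by positivity
  have hDT : D ≤ T := by
    have := hT 0 le_rfl hemax0.le
    rwa [Real.rpow_zero, one_mul] at this
  have expand : (b0 * ‖x‖ ^ (-α) + b1 + ∑ i, b i * ‖x‖ ^ (e i)) • x -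
      (b0 * ‖y‖ ^ (-α) + b1 + ∑ i, b i * ‖y‖ ^ (e i)) • y
      = b0 • ((‖x‖ ^ (-α)) • x - (‖y‖ ^ (-α)) • y) + b1 • (x - y)
        + ∑ i, b i • ((‖x‖ ^ (e i)) • x - (‖y‖ ^ (e i)) • y) := by
    simp only [smul_sub, smul_smul, add_smul, Finset.sum_smul, Finset.sum_sub_distrib]
    abel
  rw [expand]
  have bound0 : ‖b0 • ((‖x‖ ^ (-α)) • x - (‖y‖ ^ (-α)) • y)‖ ≤ 4 * asup * T := by
    rw [norm_smul, Real.norm_eq_abs, abs_of_nonneg hb0]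
    calc b0 * ‖(‖x‖ ^ (-α)) • x - (‖y‖ ^ (-α)) • y‖
        ≤ asup * (4 * D ^ (1 - α)) :=
          mul_le_mul hb0' (neg_term' hα0 hα1 x y) (norm_nonneg _) hasup0
      _ = 4 * asup * D ^ (1 - α) := by ring
      _ ≤ 4 * asup * T := by
          apply mul_le_mul_of_nonneg_left _ (by linarith)
          rw [hTdef]
          exact le_mul_of_one_le_left (Real.rpow_nonneg hD0 _) hone
  have bound1 : ‖b1 • (x - y)‖ ≤ asup * T := by
    rw [norm_smul, Real.norm_eq_abs, abs_of_nonneg hb1]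
    exact mul_le_mul hb1' hDT hD0 hasup0
  have boundS : ‖∑ i, b i • ((‖x‖ ^ (e i)) • x - (‖y‖ ^ (e i)) • y)‖
      ≤ asup * (∑ i, (1 + 2 * e i)) * T := by
    calc ‖∑ i, b i • ((‖x‖ ^ (e i)) • x - (‖y‖ ^ (e i)) • y)‖
        ≤ ∑ i, ‖b i • ((‖x‖ ^ (e i)) • x - (‖y‖ ^ (e i)) • y)‖ :=
          norm_sum_le _ _
      _ ≤ ∑ i, asup * ((1 + 2 * e i) * T) := by
          apply Finset.sum_le_sum
          intro i _
          rw [norm_smul, Real.norm_eq_abs, abs_of_nonneg (hb i)]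
          have hpt : ‖(‖x‖ ^ (e i)) • x - (‖y‖ ^ (e i)) • y‖
              ≤ (1 + 2 * e i) * T := by
            calc ‖(‖x‖ ^ (e i)) • x - (‖y‖ ^ (e i)) • y‖
                ≤ (1 + 2 * e i) * R ^ (e i) * ‖x - y‖ := pos_term (hepos i) x y
              _ = (1 + 2 * e i) * (R ^ (e i) * D) := by rw [hDdef]; ring
              _ ≤ (1 + 2 * e i) * T :=
                  mul_le_mul_of_nonneg_left (hT (e i) (hepos i).le (hemax i))
                    (by linarith [(hepos i).le])
          exact mul_le_mul (hb' i) hpt (norm_nonneg _) hasup0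
      _ = asup * (∑ i, (1 + 2 * e i)) * T := by
          conv_rhs => rw [mul_assoc, Finset.sum_mul, Finset.mul_sum]
  calc ‖b0 • ((‖x‖ ^ (-α)) • x - (‖y‖ ^ (-α)) • y) + b1 • (x - y)
        + ∑ i, b i • ((‖x‖ ^ (e i)) • x - (‖y‖ ^ (e i)) • y)‖
      ≤ ‖b0 • ((‖x‖ ^ (-α)) • x - (‖y‖ ^ (-α)) • y) + b1 • (x - y)‖
        + ‖∑ i, b i • ((‖x‖ ^ (e i)) • x - (‖y‖ ^ (e i)) • y)‖ := norm_add_le _ _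
    _ ≤ (‖b0 • ((‖x‖ ^ (-α)) • x - (‖y‖ ^ (-α)) • y)‖ + ‖b1 • (x - y)‖)
        + ‖∑ i, b i • ((‖x‖ ^ (e i)) • x - (‖y‖ ^ (e i)) • y)‖ :=
          add_le_add_left (norm_add_le _ _) _
    _ ≤ (4 * asup * T + asup * T) + asup * (∑ i, (1 + 2 * e i)) * T :=
          add_le_add (add_le_add bound0 bound1) boundS
    _ = asup * (5 + ∑ i, (1 + 2 * e i)) * T := by ring
    _ = asup * (5 + ∑ i, (1 + 2 * e i)) * R ^ (emax + α) * D ^ (1 - α) := by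
          rw [hTdef]; ring

lemma partB {N : ℕ} {α : ℝ} (hα0 : 0 < α) (hα1 : α < 1)
    (e : Fin N → ℝ) (hepos : ∀ i, 0 < e i)
    (emax : ℝ) (hemax : ∀ i, e i ≤ emax) (hemax0 : 0 < emax)
    (c0 c1 : ℝ) (c : Fin N → ℝ) (A : ℝ)
    (h0 : |c0| ≤ A) (h1 : |c1| ≤ A) (hc : ∀ i, |c i| ≤ A)
    (y : E) (R : ℝ) (hRy : ‖y‖ ≤ R) (hR1 : 1 ≤ R) :
    ‖(c0 * ‖y‖ ^ (-α) + c1 + ∑ i, c i * ‖y‖ ^ (e i)) • y‖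
      ≤ ((N : ℝ) + 2) * R ^ (emax + 1) * A := by
  have hA0 : 0 ≤ A := (abs_nonneg c0).trans h0
  have hR0 : 0 < R := lt_of_lt_of_le one_pos hR1
  set u := ‖y‖ with hudef
  have hu0 : 0 ≤ u := norm_nonneg y
  have k0 : u ^ (-α) * u ≤ R ^ (emax + 1) := by
    rcases eq_or_lt_of_le hu0 with h | h
    · rw [← h, mul_zero]; positivity
    · have heq : u ^ (-α) * u = u ^ (1 - α) := by
        rw [← Real.rpow_add_one h.ne']; ring_nf
      rw [heq]
      calc u ^ (1 - α) ≤ R ^ (1 - α) := Real.rpow_le_rpow hu0 hRy (by linarith)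
        _ ≤ R ^ (emax + 1) := Real.rpow_le_rpow_of_exponent_le hR1 (by linarith)
  have k1 : u ≤ R ^ (emax + 1) := by
    calc u ≤ R := hRy
      _ = R ^ (1:ℝ) := (Real.rpow_one R).symm
      _ ≤ R ^ (emax + 1) := Real.rpow_le_rpow_of_exponent_le hR1 (by linarith)
  have ki : ∀ i, u ^ (e i) * u ≤ R ^ (emax + 1) := fun i => by
    calc u ^ (e i) * u ≤ R ^ (e i) * R :=
        mul_le_mul (Real.rpow_le_rpow hu0 hRy (hepos i).le) hRy hu0
          (Real.rpow_nonneg hR0.le _)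
      _ = R ^ (e i + 1) := (Real.rpow_add_one hR0.ne' _).symm
      _ ≤ R ^ (emax + 1) := Real.rpow_le_rpow_of_exponent_le hR1 (by linarith [hemax i])
  rw [norm_smul, Real.norm_eq_abs]
  have habsu : ∀ z : ℝ, |u ^ z| = u ^ z := fun z =>
    abs_of_nonneg (Real.rpow_nonneg hu0 z)
  have habs : |c0 * u ^ (-α) + c1 + ∑ i, c i * u ^ (e i)|
      ≤ |c0| * u ^ (-α) + |c1| + ∑ i, |c i| * u ^ (e i) := by
    calc |c0 * u ^ (-α) + c1 + ∑ i, c i * u ^ (e i)|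
        ≤ |c0 * u ^ (-α) + c1| + |∑ i, c i * u ^ (e i)| := abs_add_le _ _
      _ ≤ (|c0 * u ^ (-α)| + |c1|) + ∑ i, |c i * u ^ (e i)| :=
          add_le_add (abs_add_le _ _) (Finset.abs_sum_le_sum_abs _ _)
      _ = |c0| * u ^ (-α) + |c1| + ∑ i, |c i| * u ^ (e i) := by
          simp only [abs_mul, habsu]
  calc |c0 * u ^ (-α) + c1 + ∑ i, c i * u ^ (e i)| * u
      ≤ (|c0| * u ^ (-α) + |c1| + ∑ i, |c i| * u ^ (e i)) * u :=
        mul_le_mul_of_nonneg_right habs hu0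
    _ = |c0| * (u ^ (-α) * u) + |c1| * u + ∑ i, |c i| * (u ^ (e i) * u) := by
        rw [add_mul, add_mul, Finset.sum_mul]
        simp only [mul_assoc]
    _ ≤ A * R ^ (emax + 1) + A * R ^ (emax + 1) + ∑ _i : Fin N, A * R ^ (emax + 1) := by
        apply add_le_add
        apply add_le_add
        · exact mul_le_mul h0 k0 (by positivity) hA0
        · exact mul_le_mul h1 k1 hu0 hA0
        · apply Finset.sum_le_sum
          intro i _
          exact mul_le_mul (hc i) (ki i) (by positivity) hA0
    _ = ((N : ℝ) + 2) * R ^ (emax + 1) * A := by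
        rw [Finset.sum_const, Finset.card_univ, Fintype.card_fin, nsmul_eq_mul]
        ring

end

theorem stmt13 (d : ℕ) (hd : 1 ≤ d) (N : ℕ) (hN : 1 ≤ N)
    (α : ℝ) (hα0 : 0 < α) (hα1 : α < 1)
    (e : Fin N → ℝ) (hmono : StrictMono e) (hepos : ∀ i, 0 < e i)
    (astar asup : ℝ) (hstar : 0 < astar) (hstarsup : astar ≤ asup)
    (s : ℝ) (hs : s = e ⟨N - 1, by omega⟩ + 2) :
    ∃ K : ℝ, 0 < K ∧
      ∀ aa aa' : EuclideanSpace ℝ (Fin (N + 2)),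
        (∀ i, 0 ≤ aa i ∧ aa i ≤ asup) → (∀ i, 0 ≤ aa' i ∧ aa' i ≤ asup) →
        astar ≤ aa 0 → astar ≤ aa 1 → astar ≤ aa ⟨N + 1, by omega⟩ →
        astar ≤ aa' 0 → astar ≤ aa' 1 → astar ≤ aa' ⟨N + 1, by omega⟩ →
        ∀ x y : EuclideanSpace ℝ (Fin d),
          ‖(aa 0 * ‖x‖ ^ (-α) + aa 1 +
              ∑ i : Fin N, aa ⟨i.1 + 2, Nat.add_lt_add_right i.isLt 2⟩ * ‖x‖ ^ (e i)) • x -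
            (aa' 0 * ‖y‖ ^ (-α) + aa' 1 +
              ∑ i : Fin N, aa' ⟨i.1 + 2, Nat.add_lt_add_right i.isLt 2⟩ * ‖y‖ ^ (e i)) • y‖ ≤
            2 * (s - 1) / (1 - α) * K * (1 + ‖x‖ + ‖y‖) ^ (s - 2 + α) * ‖x - y‖ ^ (1 - α) +
              3 * (N : ℝ) * (1 + ‖x‖ + ‖y‖) ^ (s - 1) * ‖aa - aa'‖ := by
  have h1α : (0:ℝ) < 1 - α := by linarith
  set emax := e ⟨N - 1, by omega⟩ with hemaxdef
  have hemax0 : 0 < emax := hepos _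
  have hemax : ∀ i, e i ≤ emax := by
    intro i
    apply hmono.monotone
    rw [Fin.le_def]
    simp only []
    omega
  have hs1 : 0 < s - 1 := by rw [hs]; linarith
  have hs2 : s - 2 = emax := by rw [hs]; ring
  have hs3 : s - 1 = emax + 1 := by rw [hs]; ring
  have hasup0 : 0 < asup := lt_of_lt_of_le hstar hstarsup
  have hsum0 : 0 ≤ ∑ i : Fin N, (1 + 2 * e i) :=
    Finset.sum_nonneg fun i _ => by linarith [(hepos i).le]
  set C := asup * (5 + ∑ i : Fin N, (1 + 2 * e i)) + 1 with hCdef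
  have hC0 : 0 < C := by nlinarith
  refine ⟨C * (1 - α) / (2 * (s - 1)), div_pos (mul_pos hC0 h1α) (by linarith), ?_⟩
  intro aa aa' haa haa' _ _ _ _ _ _ x y
  have hKeq : 2 * (s - 1) / (1 - α) * (C * (1 - α) / (2 * (s - 1))) = C := by
    have hne1 : (1 - α) ≠ 0 := ne_of_gt h1α
    have hne2 : s - 1 ≠ 0 := ne_of_gt hs1
    field_simp
  rw [hKeq, hs2, hs3]
  set R := 1 + ‖x‖ + ‖y‖ with hRdef
  have hR1 : 1 ≤ R := by rw [hRdef]; linarith [norm_nonneg x, norm_nonneg y]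
  have hRy : ‖y‖ ≤ R := by rw [hRdef]; linarith [norm_nonneg x]
  have hcoord : ∀ j : Fin (N + 2), |aa j - aa' j| ≤ ‖aa - aa'‖ := fun j => by
    have h := coord_le_norm (aa - aa') j
    simpa using h
  set Fx := aa 0 * ‖x‖ ^ (-α) + aa 1 +
      ∑ i : Fin N, aa ⟨i.1 + 2, Nat.add_lt_add_right i.isLt 2⟩ * ‖x‖ ^ (e i) with hFx
  set Fy := aa 0 * ‖y‖ ^ (-α) + aa 1 +
      ∑ i : Fin N, aa ⟨i.1 + 2, Nat.add_lt_add_right i.isLt 2⟩ * ‖y‖ ^ (e i) with hFy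
  set Fy' := aa' 0 * ‖y‖ ^ (-α) + aa' 1 +
      ∑ i : Fin N, aa' ⟨i.1 + 2, Nat.add_lt_add_right i.isLt 2⟩ * ‖y‖ ^ (e i) with hFy'
  have tri : ‖Fx • x - Fy' • y‖ ≤ ‖Fx • x - Fy • y‖ + ‖(Fy - Fy') • y‖ := by
    have hsp : Fx • x - Fy' • y = (Fx • x - Fy • y) + (Fy - Fy') • y := by
      rw [sub_smul]; abel
    rw [hsp]; exact norm_add_le _ _
  have hA : ‖Fx • x - Fy • y‖ ≤
      asup * (5 + ∑ i : Fin N, (1 + 2 * e i)) * R ^ (emax + α) * ‖x - y‖ ^ (1 - α) := by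
    rw [hFx, hFy]
    exact partA hα0 hα1 e hepos emax hemax hemax0 asup (aa 0) (aa 1)
      (fun i => aa ⟨i.1 + 2, Nat.add_lt_add_right i.isLt 2⟩)
      (haa 0).1 (haa 0).2 (haa 1).1 (haa 1).2
      (fun i => (haa _).1) (fun i => (haa _).2) x y
  have hB : ‖(Fy - Fy') • y‖ ≤ ((N : ℝ) + 2) * R ^ (emax + 1) * ‖aa - aa'‖ := by
    have hdiff : Fy - Fy' = (aa 0 - aa' 0) * ‖y‖ ^ (-α) + (aa 1 - aa' 1) +
        ∑ i : Fin N, (aa ⟨i.1 + 2, Nat.add_lt_add_right i.isLt 2⟩ -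
          aa' ⟨i.1 + 2, Nat.add_lt_add_right i.isLt 2⟩) * ‖y‖ ^ (e i) := by
      rw [hFy, hFy']
      simp only [sub_mul]
      rw [Finset.sum_sub_distrib]
      ring
    rw [hdiff]
    exact partB hα0 hα1 e hepos emax hemax hemax0 _ _ _ _
      (hcoord 0) (hcoord 1) (fun i => hcoord _) y R hRy hR1
  have key1 : asup * (5 + ∑ i : Fin N, (1 + 2 * e i)) * R ^ (emax + α) * ‖x - y‖ ^ (1 - α)
      ≤ C * R ^ (emax + α) * ‖x - y‖ ^ (1 - α) := by
    have hle : asup * (5 + ∑ i : Fin N, (1 + 2 * e i)) ≤ C := by rw [hCdef]; linarith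
    apply mul_le_mul_of_nonneg_right _ (Real.rpow_nonneg (norm_nonneg _) _)
    apply mul_le_mul_of_nonneg_right hle
    apply Real.rpow_nonneg
    linarith
  have key2 : ((N : ℝ) + 2) * R ^ (emax + 1) * ‖aa - aa'‖
      ≤ 3 * (N : ℝ) * R ^ (emax + 1) * ‖aa - aa'‖ := by
    have hN1 : (1:ℝ) ≤ (N : ℝ) := by exact_mod_cast hN
    apply mul_le_mul_of_nonneg_right _ (norm_nonneg _)
    apply mul_le_mul_of_nonneg_right _ (Real.rpow_nonneg (by linarith) _)
    linarith
  linarith [tri, hA, hB, key1, key2]
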